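/- In a class of structures closed under substructure generated by subsets (admitting intersections), two tuples realize the same Galois type over M iff there is an isomorphism between the generated substructures fixing M and mapping one tuple to the other: if gtp(a1/M; N1) = gtp(a2/M; N2) then there is an isomorphism f : cl^{N1}(a1 ∪ M) → cl^{N2}(a2 ∪ M) with f fixing M pointwise and f(a1) = a2. -/

import Mathlib

open FirstOrder Language

/-- In a universal class (models of a universal theory), if two tuples have
the same Galois type over `M` (witnessed by embeddings into a common amalgam), then there
is an isomorphism between the generated substructures `cl^{N1}(a1 ∪ M)` and
`cl^{N2}(a2 ∪ M)` fixing `M` pointwise and sending `a1` to `a2`. -/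
theorem stmt_4 {L : FirstOrder.Language} (T : L.Theory)
    (hT : ∀ ψ ∈ T, ∃ (n : ℕ) (φ : L.BoundedFormula Empty n), φ.IsQF ∧ ψ = φ.alls)
    {M N1 N2 P : Type*} [L.Structure M] [L.Structure N1] [L.Structure N2] [L.Structure P]
    (hN1 : N1 ⊨ T) (hN2 : N2 ⊨ T)
    (i1 : M ↪[L] N1) (i2 : M ↪[L] N2) (a1 : N1) (a2 : N2)
    (g : N1 ↪[L] P) (h : N2 ↪[L] P)
    (hcomm : g.comp i1 = h.comp i2) (ha : g a1 = h a2) :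
    ∃ f : (↥(Substructure.closure L (Set.range i1 ∪ {a1}))) ≃[L]
          (↥(Substructure.closure L (Set.range i2 ∪ {a2}))),
      (∀ m : M,
        (f ⟨i1 m, Substructure.subset_closure (Or.inl ⟨m, rfl⟩)⟩ : N2) = i2 m) ∧
      ((f ⟨a1, Substructure.subset_closure (Or.inr rfl)⟩ : N2) = a2) := by
  classical
  have hc : ∀ m : M, g (i1 m) = h (i2 m) := fun m => by
    rw [← Embedding.comp_apply, hcomm, Embedding.comp_apply]
  set S1 := Substructure.closure L (Set.range i1 ∪ {a1}) with hS1
  set S2 := Substructure.closure L (Set.range i2 ∪ {a2}) with hS2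
  have e : S1.map g.toHom = S2.map h.toHom := by
    rw [hS1, hS2, Substructure.map_closure, Substructure.map_closure]
    congr 1
    have : Set.range (⇑g ∘ ⇑i1) = Set.range (⇑h ∘ ⇑i2) := by
      refine congrArg _ (funext fun m => ?_); exact hc m
    simpa [Set.image_union, Set.image_singleton, Set.image_insert_eq, ← Set.range_comp, ha] using
      congrArg (· ∪ {h a2}) this
  have key : ∀ (S : L.Substructure P) (e' : S1.map g.toHom = S) (x : S1),
      (((e' ▸ g.substructureEquivMap S1) x : S) : P) = g x := by
    rintro S rfl x; rfl
  refine ⟨((h.substructureEquivMap S2).symm).comp (e ▸ g.substructureEquivMap S1), ?_, ?_⟩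
  · intro m
    apply h.injective
    have := key _ e ⟨i1 m, Substructure.subset_closure (Or.inl ⟨m, rfl⟩)⟩
    calc (h _ : P) = (((e ▸ g.substructureEquivMap S1)
          ⟨i1 m, Substructure.subset_closure (Or.inl ⟨m, rfl⟩)⟩ : S2.map h.toHom) : P) := by
            rw [Equiv.comp_apply]
            rw [← Embedding.substructureEquivMap_apply h S2,
              (h.substructureEquivMap S2).apply_symm_apply]
      _ = g (i1 m) := this
      _ = h (i2 m) := hc m
  · apply h.injective
    have := key _ e ⟨a1, Substructure.subset_closure (Or.inr rfl)⟩
    calc (h _ : P) = (((e ▸ g.substructureEquivMap S1)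
          ⟨a1, Substructure.subset_closure (Or.inr rfl)⟩ : S2.map h.toHom) : P) := by
            rw [Equiv.comp_apply]
            rw [← Embedding.substructureEquivMap_apply h S2,
              (h.substructureEquivMap S2).apply_symm_apply]
      _ = g a1 := this
      _ = h a2 := ha
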